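/- arXiv:1903.00278 — 2 statements merged into one kernel-verified Lean document; each statement's English description precedes it below -/
import Mathlib

section
/- Let X_1, ..., X_n be independent, square-integrable real-valued random variables such that for some constant b > 0, |X_i| ≤ b almost surely for all i. Let v = Σ_{i=1}^n E[X_i^2], and assume v > 0. Then for every ε > 0, P( |(1/n) Σ_{i=1}^n (X_i − E[X_i])| > ε ) ≤ 2·exp( −(v/b^2)·h(n·b·ε/v) ), where h(u) = (1+u)·ln(1+u) − u. -/
open MeasureTheory ProbabilityTheory Real
open scoped ENNReal

/-- The function `h(u) = (1+u)·ln(1+u) − u` from Bennett's inequality. -/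
noncomputable def bennettH (u : ℝ) : ℝ := (1 + u) * Real.log (1 + u) - u


lemma g_tsum (x : ℝ) : Real.exp x - x - 1 = ∑' n : ℕ, x ^ (n + 2) / (Nat.factorial (n + 2) : ℝ) := by
  have hs := Real.summable_pow_div_factorial x
  have h : Real.exp x = ∑' n : ℕ, x ^ n / (Nat.factorial n : ℝ) := by
    rw [Real.exp_eq_exp_ℝ, NormedSpace.exp_eq_tsum_div]
  rw [hs.tsum_eq_zero_add] at h
  rw [((summable_nat_add_iff 1).mpr hs).tsum_eq_zero_add] at h
  norm_num at h
  simp only [show ∀ b : ℕ, b + 1 + 1 = b + 2 from fun b => rfl] at h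
  rw [h]; ring

lemma g_ratio_mono {a t : ℝ} (ha : 0 ≤ a) (hat : a ≤ t) :
    t ^ 2 * (Real.exp a - a - 1) ≤ a ^ 2 * (Real.exp t - t - 1) := by
  have ht : 0 ≤ t := ha.trans hat
  rw [g_tsum a, g_tsum t, ← tsum_mul_left, ← tsum_mul_left]
  have hsa : Summable fun n : ℕ => t ^ 2 * (a ^ (n + 2) / (Nat.factorial (n + 2) : ℝ)) :=
    (((summable_nat_add_iff 2).mpr (Real.summable_pow_div_factorial a))).mul_left _
  have hst : Summable fun n : ℕ => a ^ 2 * (t ^ (n + 2) / (Nat.factorial (n + 2) : ℝ)) :=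
    (((summable_nat_add_iff 2).mpr (Real.summable_pow_div_factorial t))).mul_left _
  refine hsa.tsum_le_tsum (fun n => ?_) hst
  have hfac : (0:ℝ) < (Nat.factorial (n + 2) : ℝ) := by positivity
  rw [mul_div_assoc', mul_div_assoc', div_le_div_iff₀ hfac hfac]
  have key : t ^ 2 * a ^ (n + 2) ≤ a ^ 2 * t ^ (n + 2) := by
    have h3 : a ^ n ≤ t ^ n := pow_le_pow_left₀ ha hat n
    have h4 : (0:ℝ) ≤ a ^ 2 * t ^ 2 := by positivity
    calc t ^ 2 * a ^ (n + 2) = (a ^ 2 * t ^ 2) * a ^ n := by ring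
    _ ≤ (a ^ 2 * t ^ 2) * t ^ n := mul_le_mul_of_nonneg_left h3 h4
    _ = a ^ 2 * t ^ (n + 2) := by ring
  exact mul_le_mul_of_nonneg_right key hfac.le

lemma g_abs (x : ℝ) : Real.exp x - x - 1 ≤ Real.exp |x| - |x| - 1 := by
  rcases abs_cases x with ⟨h, _⟩ | ⟨h, hneg⟩
  · rw [h]
  · rw [h]
    have := Real.self_le_sinh_iff.mpr (by linarith : (0:ℝ) ≤ -x)
    rw [Real.sinh_eq] at this
    simp only [neg_neg] at this
    linarith

/-- Key pointwise bound: for `|x| ≤ t`, `0 < t`, `exp x ≤ 1 + x + (x²/t²)(eᵗ - t - 1)`. -/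
lemma exp_pointwise {x t : ℝ} (ht : 0 < t) (hx : |x| ≤ t) :
    Real.exp x ≤ 1 + x + x ^ 2 / t ^ 2 * (Real.exp t - t - 1) := by
  have h1 : Real.exp x - x - 1 ≤ Real.exp |x| - |x| - 1 := g_abs x
  have h2 : t ^ 2 * (Real.exp |x| - |x| - 1) ≤ |x| ^ 2 * (Real.exp t - t - 1) :=
    g_ratio_mono (abs_nonneg x) hx
  have ht2 : (0:ℝ) < t ^ 2 := by positivity
  have : Real.exp x - x - 1 ≤ x ^ 2 / t ^ 2 * (Real.exp t - t - 1) := by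
    rw [div_mul_eq_mul_div, le_div_iff₀ ht2]
    calc (Real.exp x - x - 1) * t ^ 2 ≤ (Real.exp |x| - |x| - 1) * t ^ 2 := by nlinarith
    _ ≤ x ^ 2 * (Real.exp t - t - 1) := by rw [← sq_abs x]; linarith [h2]
  linarith

lemma integrable_exp_mul {Ω : Type*} [MeasurableSpace Ω] (P : Measure Ω) [IsProbabilityMeasure P]
    (Y : Ω → ℝ) (hm : Measurable Y) (c : ℝ) (hbd : ∀ᵐ ω ∂P, |Y ω| ≤ c) (lam : ℝ) (hlam : 0 ≤ lam) :
    Integrable (fun ω => Real.exp (lam * Y ω)) P := by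
  refine Integrable.mono' (integrable_const (Real.exp (lam * c)))
    ((hm.const_mul lam).exp.aestronglyMeasurable) ?_
  filter_upwards [hbd] with ω hω
  rw [Real.norm_eq_abs, abs_of_pos (Real.exp_pos _), Real.exp_le_exp]
  have := (abs_le.mp hω).2
  nlinarith

lemma mgf_single {Ω : Type*} [MeasurableSpace Ω] (P : Measure Ω) [IsProbabilityMeasure P]
    (Y : Ω → ℝ) (hm : Measurable Y) (hL2 : MemLp Y 2 P) (b : ℝ) (hb : 0 < b)
    (hbd : ∀ᵐ ω ∂P, |Y ω| ≤ b) (lam : ℝ) (hlam : 0 < lam) :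
    mgf (fun ω => Y ω - ∫ ω', Y ω' ∂P) P lam
      ≤ Real.exp ((∫ ω, (Y ω) ^ 2 ∂P) / b ^ 2 * (Real.exp (lam * b) - lam * b - 1)) := by
  set μY := ∫ ω', Y ω' ∂P with hμY
  set m := ∫ ω, (Y ω) ^ 2 ∂P with hm2
  set g := Real.exp (lam * b) - lam * b - 1 with hg
  have hYint : Integrable Y P := hL2.integrable one_le_two
  have hY2int : Integrable (fun ω => (Y ω) ^ 2) P := hL2.integrable_sq
  have hexpint : Integrable (fun ω => Real.exp (lam * Y ω)) P :=
    integrable_exp_mul P Y hm b hbd lam hlam.le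
  have hpt : ∀ᵐ ω ∂P, Real.exp (lam * Y ω) ≤ 1 + lam * Y ω + g / b ^ 2 * (Y ω) ^ 2 := by
    filter_upwards [hbd] with ω hω
    have ht : 0 < lam * b := mul_pos hlam hb
    have hx : |lam * Y ω| ≤ lam * b := by
      rw [abs_mul, abs_of_pos hlam]
      exact mul_le_mul_of_nonneg_left hω hlam.le
    have := exp_pointwise ht hx
    have heq : (lam * Y ω) ^ 2 / (lam * b) ^ 2 = (Y ω) ^ 2 / b ^ 2 := by
      field_simp
    rw [heq] at this
    calc Real.exp (lam * Y ω) ≤ 1 + lam * Y ω + (Y ω) ^ 2 / b ^ 2 * g := this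
    _ = 1 + lam * Y ω + g / b ^ 2 * (Y ω) ^ 2 := by ring
  have hint : ∫ ω, (1 + lam * Y ω + g / b ^ 2 * (Y ω) ^ 2) ∂P = 1 + lam * μY + g / b ^ 2 * m := by
    rw [integral_add (by exact (integrable_const 1).add (hYint.const_mul lam))
      (hY2int.const_mul _), integral_add (integrable_const 1) (hYint.const_mul lam),
      integral_const, integral_const_mul, integral_const_mul]
    simp [hμY, hm2]
  have step1 : ∫ ω, Real.exp (lam * Y ω) ∂P ≤ 1 + lam * μY + g / b ^ 2 * m := by
    rw [← hint]
    exact integral_mono_ae hexpint ((((integrable_const 1).add (hYint.const_mul lam)).add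
      (hY2int.const_mul _))) hpt
  have hmgf : mgf (fun ω => Y ω - μY) P lam
      = Real.exp (-(lam * μY)) * ∫ ω, Real.exp (lam * Y ω) ∂P := by
    rw [mgf]
    simp_rw [mul_sub, Real.exp_sub, div_eq_mul_inv, ← Real.exp_neg]
    rw [integral_mul_const]
    ring
  rw [hmgf]
  calc Real.exp (-(lam * μY)) * ∫ ω, Real.exp (lam * Y ω) ∂P
      ≤ Real.exp (-(lam * μY)) * (1 + lam * μY + g / b ^ 2 * m) := by
        exact mul_le_mul_of_nonneg_left step1 (Real.exp_pos _).le
    _ ≤ Real.exp (-(lam * μY)) * Real.exp (lam * μY + g / b ^ 2 * m) := by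
        refine mul_le_mul_of_nonneg_left ?_ (Real.exp_pos _).le
        have := Real.add_one_le_exp (lam * μY + g / b ^ 2 * m)
        linarith
    _ = Real.exp (m / b ^ 2 * g) := by
        rw [← Real.exp_add]; ring_nf

lemma bennett_one_sided {Ω : Type*} [MeasurableSpace Ω] (P : Measure Ω) [IsProbabilityMeasure P]
    (n : ℕ) (hn : 0 < n) (X : Fin n → Ω → ℝ)
    (hmeas : ∀ i, Measurable (X i))
    (hindep : iIndepFun X P)
    (hL2 : ∀ i, MemLp (X i) 2 P)
    (b : ℝ) (hb : 0 < b) (hbound : ∀ i, ∀ᵐ ω ∂P, |X i ω| ≤ b)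
    (v : ℝ) (hv : v = ∑ i, ∫ ω, (X i ω) ^ 2 ∂P) (hvpos : 0 < v)
    (ε : ℝ) (hε : 0 < ε) :
    P {ω | (n : ℝ) * ε ≤ ∑ i, (X i ω - ∫ ω', X i ω' ∂P)}
      ≤ ENNReal.ofReal (Real.exp (-(v / b ^ 2) * bennettH ((n : ℝ) * b * ε / v))) := by
  set u : ℝ := (n : ℝ) * b * ε / v with hu_def
  have hnpos : (0:ℝ) < n := Nat.cast_pos.mpr hn
  have hu : 0 < u := by positivity
  have huv : u * v = (n : ℝ) * b * ε := by
    rw [hu_def, div_mul_cancel₀]; exact hvpos.ne'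
  set L : ℝ := Real.log (1 + u) with hL_def
  have hLpos : 0 < L := Real.log_pos (by linarith)
  set lam : ℝ := L / b with hlam_def
  have hlam : 0 < lam := div_pos hLpos hb
  have hlamb : lam * b = L := div_mul_cancel₀ _ hb.ne'
  -- the centered variables
  set Y : Fin n → Ω → ℝ := fun i ω => X i ω - ∫ ω', X i ω' ∂P with hY_def
  have hYmeas : ∀ i, Measurable (Y i) := fun i => (hmeas i).sub_const _
  have hYbd : ∀ i, ∀ᵐ ω ∂P, |Y i ω| ≤ 2 * b := by
    intro i
    have hXint : Integrable (X i) P := (hL2 i).integrable one_le_two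
    have hμ : |∫ ω', X i ω' ∂P| ≤ b := by
      have h1 : |∫ ω', X i ω' ∂P| ≤ ∫ ω', |X i ω'| ∂P := by
        simpa [Real.norm_eq_abs] using norm_integral_le_integral_norm (μ := P) (X i)
      have h2 : ∫ ω', |X i ω'| ∂P ≤ ∫ _ω', b ∂P :=
        integral_mono_ae hXint.abs (integrable_const b) (hbound i)
      simp only [integral_const, measure_univ, probReal_univ, ENNReal.toReal_one, one_smul, smul_eq_mul] at h2
      linarith
    filter_upwards [hbound i] with ω hω
    calc |Y i ω| ≤ |X i ω| + |∫ ω', X i ω' ∂P| := abs_sub _ _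
    _ ≤ b + b := add_le_add hω hμ
    _ = 2 * b := by ring
  set S : Ω → ℝ := ∑ i, Y i with hS_def
  have hSapp : ∀ ω, S ω = ∑ i, (X i ω - ∫ ω', X i ω' ∂P) := by
    intro ω; rw [hS_def]; simp [hY_def]
  have hSfun : S = fun ω => ∑ i, Y i ω := by funext ω; rw [hS_def]; simp
  have hSmeas : Measurable S := by
    rw [hSfun]; exact Finset.measurable_sum _ fun i _ => hYmeas i
  have hSbd : ∀ᵐ ω ∂P, |S ω| ≤ (n : ℝ) * (2 * b) := by
    filter_upwards [ae_all_iff.mpr hYbd] with ω hω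
    calc |S ω| = |∑ i, Y i ω| := by rw [hS_def]; simp
    _ ≤ ∑ i, |Y i ω| := Finset.abs_sum_le_sum_abs _ _
    _ ≤ ∑ _i : Fin n, (2 * b) := Finset.sum_le_sum fun i _ => hω i
    _ = (n : ℝ) * (2 * b) := by simp
  have hSint : Integrable (fun ω => Real.exp (lam * S ω)) P :=
    integrable_exp_mul P S hSmeas _ hSbd lam hlam.le
  -- Chernoff
  have hcher := measure_ge_le_exp_mul_mgf (X := S) (μ := P) ((n : ℝ) * ε) hlam.le hSint
  -- mgf bound
  have hmgf : mgf S P lam ≤ Real.exp (v / b ^ 2 * (Real.exp L - L - 1)) := by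
    have hYindep : iIndepFun Y P :=
      hindep.comp (fun i (x : ℝ) => x - ∫ ω', X i ω' ∂P)
        (fun i => (measurable_id.sub_const _))
    rw [hS_def, hYindep.mgf_sum hYmeas]
    calc ∏ i, mgf (Y i) P lam
        ≤ ∏ i, Real.exp ((∫ ω, (X i ω) ^ 2 ∂P) / b ^ 2 * (Real.exp (lam * b) - lam * b - 1)) := by
          refine Finset.prod_le_prod (fun i _ => mgf_nonneg) (fun i _ => ?_)
          exact mgf_single P (X i) (hmeas i) (hL2 i) b hb (hbound i) lam hlam
      _ = Real.exp (∑ i, (∫ ω, (X i ω) ^ 2 ∂P) / b ^ 2 * (Real.exp (lam * b) - lam * b - 1)) :=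
          (Real.exp_sum _ _).symm
      _ = Real.exp (v / b ^ 2 * (Real.exp L - L - 1)) := by
          rw [← Finset.sum_mul, ← Finset.sum_div, ← hv, hlamb]
  have hgL : Real.exp L - L - 1 = u - L := by
    rw [hL_def, Real.exp_log (by linarith)]; ring
  have hexp_eq : -lam * ((n : ℝ) * ε) + v / b ^ 2 * (u - L)
      = -(v / b ^ 2) * bennettH u := by
    have hnε : (n : ℝ) * ε = u * v / b := by rw [eq_div_iff hb.ne']; linarith [huv]
    rw [bennettH, ← hL_def, hlam_def, hnε]
    field_simp
    ring
  have hfinal : Real.exp (-lam * ((n : ℝ) * ε)) * mgf S P lam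
      ≤ Real.exp (-(v / b ^ 2) * bennettH u) := by
    calc Real.exp (-lam * ((n : ℝ) * ε)) * mgf S P lam
      ≤ Real.exp (-lam * ((n : ℝ) * ε)) * Real.exp (v / b ^ 2 * (Real.exp L - L - 1)) :=
          mul_le_mul_of_nonneg_left hmgf (Real.exp_pos _).le
      _ = Real.exp (-lam * ((n : ℝ) * ε) + v / b ^ 2 * (u - L)) := by rw [← Real.exp_add, hgL]
      _ = Real.exp (-(v / b ^ 2) * bennettH u) := by rw [hexp_eq]
  have hset : {ω | (n : ℝ) * ε ≤ ∑ i, (X i ω - ∫ ω', X i ω' ∂P)} = {ω | (n : ℝ) * ε ≤ S ω} := by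
    ext ω; simp [hSapp ω]
  rw [hset]
  have h1 : (P {ω | (n : ℝ) * ε ≤ S ω}).toReal ≤ Real.exp (-(v / b ^ 2) * bennettH u) :=
    hcher.trans hfinal
  calc P {ω | (n : ℝ) * ε ≤ S ω}
      = ENNReal.ofReal (P {ω | (n : ℝ) * ε ≤ S ω}).toReal := by
        rw [ENNReal.ofReal_toReal (measure_ne_top _ _)]
    _ ≤ ENNReal.ofReal (Real.exp (-(v / b ^ 2) * bennettH u)) := ENNReal.ofReal_le_ofReal h1

/-- **Bennett's inequality.** Let `X 1, ..., X n` be independent, square-integrable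
real random variables, `|X i| ≤ b` a.s., `v = ∑ i, E[(X i)^2] > 0`. Then for every `ε > 0`,
`P(|(1/n) ∑ i (X i − E[X i])| > ε) ≤ 2 exp(−(v/b²) h(n b ε / v))`. -/

theorem bennett_inequality
    {Ω : Type*} [MeasurableSpace Ω] (P : Measure Ω) [IsProbabilityMeasure P]
    (n : ℕ) (hn : 0 < n) (X : Fin n → Ω → ℝ)
    (hmeas : ∀ i, Measurable (X i))
    (hindep : iIndepFun X P)
    (hL2 : ∀ i, MemLp (X i) 2 P)
    (b : ℝ) (hb : 0 < b) (hbound : ∀ i, ∀ᵐ ω ∂P, |X i ω| ≤ b)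
    (v : ℝ) (hv : v = ∑ i, ∫ ω, (X i ω) ^ 2 ∂P) (hvpos : 0 < v)
    (ε : ℝ) (hε : 0 < ε) :
    P {ω | |(∑ i, (X i ω - ∫ ω', X i ω' ∂P)) / (n : ℝ)| > ε}
      ≤ ENNReal.ofReal (2 * Real.exp (-(v / b ^ 2) * bennettH ((n : ℝ) * b * ε / v))) := by
  have hnpos : (0:ℝ) < n := Nat.cast_pos.mpr hn
  set X' : Fin n → Ω → ℝ := fun i ω => -X i ω with hX'_def
  have h1 := bennett_one_sided P n hn X hmeas hindep hL2 b hb hbound v hv hvpos ε hε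
  have h2 : P {ω | (n : ℝ) * ε ≤ ∑ i, (X' i ω - ∫ ω', X' i ω' ∂P)}
      ≤ ENNReal.ofReal (Real.exp (-(v / b ^ 2) * bennettH ((n : ℝ) * b * ε / v))) := by
    refine bennett_one_sided P n hn X' (fun i => (hmeas i).neg) ?_ (fun i => (hL2 i).neg)
      b hb (fun i => by filter_upwards [hbound i] with ω hω; simp only [hX'_def, abs_neg]; exact hω)
      v ?_ hvpos ε hε
    · exact hindep.comp (fun i (x : ℝ) => -x) (fun i => measurable_neg)
    · rw [hv]
      refine Finset.sum_congr rfl fun i _ => ?_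
      congr 1
      funext ω
      simp only [hX'_def, neg_sq]
  have hneg : ∀ ω, ∑ i, (X' i ω - ∫ ω', X' i ω' ∂P) = -∑ i, (X i ω - ∫ ω', X i ω' ∂P) := by
    intro ω
    rw [← Finset.sum_neg_distrib]
    refine Finset.sum_congr rfl fun i _ => ?_
    rw [hX'_def]
    simp only [integral_neg]
    ring
  have hsub : {ω | |(∑ i, (X i ω - ∫ ω', X i ω' ∂P)) / (n : ℝ)| > ε}
      ⊆ {ω | (n : ℝ) * ε ≤ ∑ i, (X i ω - ∫ ω', X i ω' ∂P)}
        ∪ {ω | (n : ℝ) * ε ≤ ∑ i, (X' i ω - ∫ ω', X' i ω' ∂P)} := by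
    intro ω hω
    simp only [Set.mem_setOf_eq, gt_iff_lt] at hω
    rw [abs_div, abs_of_pos hnpos, lt_div_iff₀ hnpos] at hω
    simp only [Set.mem_union, Set.mem_setOf_eq, hneg ω]
    rcases abs_cases (∑ i, (X i ω - ∫ ω', X i ω' ∂P)) with ⟨heq, _⟩ | ⟨heq, _⟩
    · left; rw [heq] at hω; linarith [mul_comm ε (n:ℝ)]
    · right; rw [heq] at hω; linarith [mul_comm ε (n:ℝ)]
  calc P {ω | |(∑ i, (X i ω - ∫ ω', X i ω' ∂P)) / (n : ℝ)| > ε}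
      ≤ P ({ω | (n : ℝ) * ε ≤ ∑ i, (X i ω - ∫ ω', X i ω' ∂P)}
        ∪ {ω | (n : ℝ) * ε ≤ ∑ i, (X' i ω - ∫ ω', X' i ω' ∂P)}) := measure_mono hsub
    _ ≤ P {ω | (n : ℝ) * ε ≤ ∑ i, (X i ω - ∫ ω', X i ω' ∂P)}
        + P {ω | (n : ℝ) * ε ≤ ∑ i, (X' i ω - ∫ ω', X' i ω' ∂P)} := measure_union_le _ _
    _ ≤ ENNReal.ofReal (Real.exp (-(v / b ^ 2) * bennettH ((n : ℝ) * b * ε / v)))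
        + ENNReal.ofReal (Real.exp (-(v / b ^ 2) * bennettH ((n : ℝ) * b * ε / v))) :=
          add_le_add h1 h2
    _ = ENNReal.ofReal (2 * Real.exp (-(v / b ^ 2) * bennettH ((n : ℝ) * b * ε / v))) := by
          rw [← ENNReal.ofReal_add (Real.exp_pos _).le (Real.exp_pos _).le]
          ring_nf
end

section
/- Let h(u) = (1+u)·ln(1+u) − u. For all ε ∈ (0, 1], all p with 0 < p ≤ √ε, and all δ ∈ (0,1), one has ln(2/δ)/h(ε/p) ≤ (8/3)·ln(2/δ)/ε. In particular, the expected number of labels required by active labeling, namely p times the Bennett sample size ln(2/δ)/(p·h(ε/p)), is at most (8/3)·ln(2/δ)/ε, i.e., of order O(1/ε) whenever the disagreement fraction satisfies p = O(√ε). -/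
open Real

lemma aux_log_deriv {y : ℝ} (hy : 0 < y) :
    HasDerivAt (fun u : ℝ => Real.log (1 + u) - 2 * u / (u + 2))
      (1 / (1 + y) - 4 / (y + 2) ^ 2) y := by
  have h1 : (1 + y) ≠ 0 := by linarith
  have h2 : (y + 2) ≠ 0 := by linarith
  have hd1 : HasDerivAt (fun u : ℝ => Real.log (1 + u)) (1 / (1 + y)) y := by
    simpa using ((hasDerivAt_id y).const_add 1).log h1
  have hd2 : HasDerivAt (fun u : ℝ => 2 * u / (u + 2)) (4 / (y + 2) ^ 2) y := by
    have h := ((hasDerivAt_id y).const_mul 2).div ((hasDerivAt_id y).add_const 2) h2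
    simp only [id_eq, mul_one] at h
    refine h.congr_deriv ?_
    ring
  exact hd1.sub hd2

/-- Classical bound `log(1+x) ≥ 2x/(x+2)` for `x ≥ 0`. -/
lemma aux_log_lb {x : ℝ} (hx : 0 ≤ x) : 2 * x / (x + 2) ≤ Real.log (1 + x) := by
  set f : ℝ → ℝ := fun u => Real.log (1 + u) - 2 * u / (u + 2) with hf
  have key : MonotoneOn f (Set.Ici 0) := by
    apply monotoneOn_of_deriv_nonneg (convex_Ici 0)
    · apply ContinuousOn.sub
      · apply ContinuousOn.log (by fun_prop)
        intro u hu; simp only [Set.mem_Ici] at hu; intro h; linarith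
      · apply ContinuousOn.div (by fun_prop) (by fun_prop)
        intro u hu; simp only [Set.mem_Ici] at hu; intro h; linarith
    · intro y hy
      rw [interior_Ici] at hy
      exact (aux_log_deriv hy).differentiableAt.differentiableWithinAt
    · intro y hy
      rw [interior_Ici] at hy
      have hy0 : (0:ℝ) < y := hy
      rw [(aux_log_deriv hy0).deriv]
      rw [div_sub_div _ _ (by linarith) (by positivity), le_div_iff₀ (by positivity)]
      nlinarith [sq_nonneg y]
  have h0 : f 0 ≤ f x := key (Set.self_mem_Ici) (Set.mem_Ici.mpr hx) hx
  simp only [hf] at h0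
  norm_num at h0
  linarith

/-- Bernstein-type bound: `bennettH u ≥ 3u²/(2u+6)` for `u ≥ 0`. -/
lemma aux_bennettH_lb {x : ℝ} (hx : 0 ≤ x) : 3 * x ^ 2 / (2 * x + 6) ≤ bennettH x := by
  set f : ℝ → ℝ := fun u => (1 + u) * Real.log (1 + u) - u - 3 * u ^ 2 / (2 * u + 6) with hf
  have hasd : ∀ y : ℝ, 0 < y →
      HasDerivAt f (Real.log (1 + y) + 1 - 1 -
        (3 * (2 * y) * (2 * y + 6) - 3 * y ^ 2 * 2) / (2 * y + 6) ^ 2) y := by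
    intro y hy
    have h1 : (1 + y) ≠ 0 := by linarith
    have h2 : (2 * y + 6) ≠ 0 := by linarith
    have hd1 : HasDerivAt (fun u : ℝ => (1 + u) * Real.log (1 + u))
        (Real.log (1 + y) + 1) y := by
      have hiu : HasDerivAt (fun u : ℝ => 1 + u) 1 y := (hasDerivAt_id y).const_add 1
      have hL : HasDerivAt (fun u : ℝ => Real.log (1 + u)) (1 / (1 + y)) y := by
        simpa using hiu.log h1
      have := hiu.mul hL
      refine this.congr_deriv ?_
      rw [one_mul, mul_one_div_cancel h1]
    have hd2 : HasDerivAt (fun u : ℝ => u) 1 y := hasDerivAt_id y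
    have hd3 : HasDerivAt (fun u : ℝ => 3 * u ^ 2 / (2 * u + 6))
        ((3 * (2 * y) * (2 * y + 6) - 3 * y ^ 2 * 2) / (2 * y + 6) ^ 2) y := by
      have hnum : HasDerivAt (fun u : ℝ => 3 * u ^ 2) (3 * (2 * y)) y := by
        have := (hasDerivAt_pow 2 y).const_mul (3:ℝ)
        simpa using this
      have hden : HasDerivAt (fun u : ℝ => 2 * u + 6) 2 y := by
        simpa using (((hasDerivAt_id y).const_mul 2).add_const 6)
      exact hnum.div hden h2
    exact (hd1.sub hd2).sub hd3
  have key : MonotoneOn f (Set.Ici 0) := by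
    apply monotoneOn_of_deriv_nonneg (convex_Ici 0)
    · apply ContinuousOn.sub (ContinuousOn.sub ?_ (by fun_prop)) ?_
      · apply ContinuousOn.mul (by fun_prop)
        apply ContinuousOn.log (by fun_prop)
        intro u hu; simp only [Set.mem_Ici] at hu; intro h; linarith
      · apply ContinuousOn.div (by fun_prop) (by fun_prop)
        intro u hu; simp only [Set.mem_Ici] at hu; intro h; linarith
    · intro y hy
      rw [interior_Ici] at hy
      exact (hasd y hy).differentiableAt.differentiableWithinAt
    · intro y hy
      rw [interior_Ici] at hy
      have hy0 : (0:ℝ) < y := hy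
      rw [(hasd y hy0).deriv]
      have hlog : 2 * y / (y + 2) ≤ Real.log (1 + y) := aux_log_lb hy0.le
      have halg : (3 * (2 * y) * (2 * y + 6) - 3 * y ^ 2 * 2) / (2 * y + 6) ^ 2
          ≤ 2 * y / (y + 2) := by
        rw [div_le_div_iff₀ (by positivity) (by positivity)]
        nlinarith [sq_nonneg y, hy0.le]
      linarith
  have h0 : f 0 ≤ f x := key (Set.self_mem_Ici) (Set.mem_Ici.mpr hx) hx
  simp only [hf, bennettH] at h0 ⊢
  norm_num at h0
  linarith

/-- **`O(1/ε)` label complexity of active labeling.** For all `ε ∈ (0, 1]`,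
`0 < p ≤ √ε` and `δ ∈ (0,1)`, one has `ln(2/δ)/h(ε/p) ≤ (8/3)·ln(2/δ)/ε`; in particular,
the expected number of labels required by active labeling, namely `p` times the Bennett
sample size `ln(2/δ)/(p·h(ε/p))`, is at most `(8/3)·ln(2/δ)/ε`. -/
theorem active_labeling_label_complexity
    (ε p δ : ℝ) (hε : ε ∈ Set.Ioc (0 : ℝ) 1) (hp : 0 < p) (hpε : p ≤ Real.sqrt ε)
    (hδ : δ ∈ Set.Ioo (0 : ℝ) 1) :
    Real.log (2 / δ) / bennettH (ε / p) ≤ (8 / 3) * Real.log (2 / δ) / ε ∧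
    p * (Real.log (2 / δ) / (p * bennettH (ε / p))) ≤ (8 / 3) * Real.log (2 / δ) / ε := by
  obtain ⟨hε0, hε1⟩ := hε
  obtain ⟨hδ0, hδ1⟩ := hδ
  set u := ε / p with hu
  have hs0 : 0 < Real.sqrt ε := Real.sqrt_pos.mpr hε0
  have hs2 : Real.sqrt ε ^ 2 = ε := Real.sq_sqrt hε0.le
  have hs1 : Real.sqrt ε ≤ 1 := by
    rw [show (1:ℝ) = Real.sqrt 1 by simp]
    exact Real.sqrt_le_sqrt hε1
  have hus : Real.sqrt ε ≤ u := by
    rw [hu, le_div_iff₀ hp]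
    nlinarith
  have hu0 : 0 < u := lt_of_lt_of_le hs0 hus
  have hkey : 3 * ε / 8 ≤ bennettH u := by
    have h1 : 3 * ε / 8 ≤ 3 * u ^ 2 / (2 * u + 6) := by
      rw [div_le_div_iff₀ (by norm_num) (by positivity)]
      have ha : Real.sqrt ε * Real.sqrt ε ≤ Real.sqrt ε * u :=
        mul_le_mul_of_nonneg_left hus hs0.le
      have hb : Real.sqrt ε * u ≤ u * u := mul_le_mul_of_nonneg_right hus hu0.le
      have hc : Real.sqrt ε * u ^ 2 ≤ u ^ 2 := by nlinarith
      nlinarith [hs2, ha, hb, hc]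
    exact le_trans h1 (aux_bennettH_lb hu0.le)
  have hH0 : 0 < bennettH u := lt_of_lt_of_le (by positivity) hkey
  have hlog0 : 0 ≤ Real.log (2 / δ) := by
    apply Real.log_nonneg
    rw [le_div_iff₀ hδ0]; linarith
  have hmain : Real.log (2 / δ) / bennettH u ≤ (8 / 3) * Real.log (2 / δ) / ε := by
    calc Real.log (2 / δ) / bennettH u ≤ Real.log (2 / δ) / (3 * ε / 8) :=
          div_le_div_of_nonneg_left hlog0 (by positivity) hkey
      _ = (8 / 3) * Real.log (2 / δ) / ε := by
          field_simp
  refine ⟨hmain, ?_⟩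
  have hrw : p * (Real.log (2 / δ) / (p * bennettH u)) = Real.log (2 / δ) / bennettH u := by
    field_simp
  rw [hrw]
  exact hmain
end
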